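/- Let F ⊂ ℝⁿ be a bounded measurable set, E ⊆ ℝⁿ measurable, and for s ∈ (0,1) set α_s(E) = s·∫_{E∖B_1} |y|^{-(n+s)} dy. Then lim_{R→∞} limsup_{s→0⁺} | α_s(E)·|F| − s·∫_F ∫_{E∖B_R} |x−y|^{-(n+s)} dx dy | = 0. -/

import Mathlib

open MeasureTheory Filter Metric Set

noncomputable def interL (n : ℕ) (s : ℝ) (A B : Set (EuclideanSpace ℝ (Fin n))) : ENNReal :=
  ∫⁻ x in A, ∫⁻ y in B, ENNReal.ofReal (‖x - y‖ ^ (-((n : ℝ) + s)))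

noncomputable def fracPer (n : ℕ) (s : ℝ) (E Ω : Set (EuclideanSpace ℝ (Fin n))) : ENNReal :=
  interL n s (E ∩ Ω) (Eᶜ ∩ Ω) + interL n s (E ∩ Ω) (Eᶜ ∩ Ωᶜ) + interL n s (E ∩ Ωᶜ) (Eᶜ ∩ Ω)

/-- The (n-1)-dimensional measure of the unit sphere `S^{n-1}`, i.e. `n·ω_n`. -/
noncomputable def sphereArea (n : ℕ) : ℝ :=
  (n : ℝ) * (volume (ball (0 : EuclideanSpace ℝ (Fin n)) 1)).toReal

open scoped ENNReal


-- s ≤ 3 * (1 - 2^(-s)) for s ∈ (0,1]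
lemma s_le_three {s : ℝ} (hs : 0 < s) (hs1 : s ≤ 1) :
    s ≤ 3 * (1 - (2:ℝ) ^ (-s)) := by
  set t : ℝ := (2:ℝ) ^ (-s) with ht
  have ht0 : 0 < t := Real.rpow_pos_of_pos two_pos _
  have hthalf : (1/2 : ℝ) ≤ t := by
    have : (2:ℝ) ^ (-1 : ℝ) ≤ (2:ℝ) ^ (-s) :=
      Real.rpow_le_rpow_of_exponent_le one_le_two (by linarith)
    rw [Real.rpow_neg_one] at this; linarith
  have hlog : Real.log t⁻¹ ≤ t⁻¹ - 1 := Real.log_le_sub_one_of_pos (inv_pos.2 ht0)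
  have hlogt : Real.log t⁻¹ = s * Real.log 2 := by
    rw [Real.log_inv, ht, Real.log_rpow two_pos]; ring
  have hinv : t⁻¹ - 1 = (1 - t) / t := by field_simp
  have h2 : (1 - t) / t ≤ 2 * (1 - t) := by
    have h1t : 0 ≤ 1 - t := by
      have : t ≤ 1 := Real.rpow_le_one_of_one_le_of_nonpos one_le_two (by linarith)
      linarith
    rw [div_le_iff₀ ht0]
    nlinarith
  have hl2 : (2/3 : ℝ) ≤ Real.log 2 := by
    have := Real.log_two_gt_d9
    linarith
  nlinarith [hlogt ▸ hlog, mul_le_mul_of_nonneg_left hl2 hs.le]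

lemma dyadic_bound (n : ℕ) {s : ℝ} (hs : 0 < s) (hs1 : s ≤ 1) :
    (∫⁻ y in (ball (0 : EuclideanSpace ℝ (Fin n)) 1)ᶜ,
        ENNReal.ofReal (‖y‖ ^ (-((n : ℝ) + s)))) ≤
      ENNReal.ofReal (3 * 2 ^ n *
        (volume (ball (0 : EuclideanSpace ℝ (Fin n)) 1)).toReal / s) := by
  set X := EuclideanSpace ℝ (Fin n)
  set ω : ℝ := (volume (ball (0 : X) 1)).toReal with hω
  have hω0 : 0 ≤ ω := ENNReal.toReal_nonneg
  have hμB : volume (ball (0 : X) 1) = ENNReal.ofReal ω :=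
    (ENNReal.ofReal_toReal measure_ball_lt_top.ne).symm
  set t : ℝ := (2:ℝ) ^ (-s) with ht
  have ht0 : 0 < t := Real.rpow_pos_of_pos two_pos _
  have ht1 : t < 1 := Real.rpow_lt_one_of_one_lt_of_neg one_lt_two (by linarith)
  have hcov : (ball (0 : X) 1)ᶜ ⊆
      ⋃ k : ℕ, (ball (0 : X) (2 ^ (k + 1)) \ ball (0 : X) (2 ^ k)) := by
    intro y hy
    have hy1 : 1 ≤ ‖y‖ := by
      simpa [mem_ball, dist_eq_norm] using hy
    have hy0 : 0 < ‖y‖ := lt_of_lt_of_le one_pos hy1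
    set k : ℕ := ⌊Real.logb 2 ‖y‖⌋₊ with hk
    have hlb0 : 0 ≤ Real.logb 2 ‖y‖ := Real.logb_nonneg one_lt_two hy1
    have h1 : (2:ℝ) ^ (k : ℝ) ≤ ‖y‖ := by
      have := Real.rpow_le_rpow_of_exponent_le one_le_two (Nat.floor_le hlb0)
      rwa [Real.rpow_logb two_pos (by norm_num) hy0] at this
    have h2 : ‖y‖ < (2:ℝ) ^ ((k : ℝ) + 1) := by
      have := Real.rpow_lt_rpow_of_exponent_lt one_lt_two (Nat.lt_floor_add_one (Real.logb 2 ‖y‖))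
      rwa [Real.rpow_logb two_pos (by norm_num) hy0] at this
    refine mem_iUnion.2 ⟨k, ?_, ?_⟩
    · rw [mem_ball, dist_eq_norm, sub_zero]
      calc ‖y‖ < (2:ℝ) ^ ((k : ℝ) + 1) := h2
        _ = (2:ℝ) ^ (k + 1) := by
          rw [← Real.rpow_natCast 2 (k+1)]; norm_num
    · rw [mem_ball, dist_eq_norm, sub_zero, not_lt]
      calc ((2:ℝ) ^ k : ℝ) = (2:ℝ) ^ (k : ℝ) := (Real.rpow_natCast 2 k).symm
        _ ≤ ‖y‖ := h1
  calc (∫⁻ y in (ball (0 : X) 1)ᶜ, ENNReal.ofReal (‖y‖ ^ (-((n : ℝ) + s))))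
      ≤ ∫⁻ y in ⋃ k : ℕ, (ball (0 : X) (2 ^ (k + 1)) \ ball (0 : X) (2 ^ k)),
          ENNReal.ofReal (‖y‖ ^ (-((n : ℝ) + s))) := lintegral_mono_set hcov
    _ ≤ ∑' k : ℕ, ∫⁻ y in (ball (0 : X) (2 ^ (k + 1)) \ ball (0 : X) (2 ^ k)),
          ENNReal.ofReal (‖y‖ ^ (-((n : ℝ) + s))) := lintegral_iUnion_le _ _
    _ ≤ ∑' k : ℕ, ENNReal.ofReal (2 ^ n * ω) * (ENNReal.ofReal t) ^ k := by
        refine ENNReal.tsum_le_tsum fun k => ?_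
        have hb : ∀ y ∈ (ball (0 : X) (2 ^ (k + 1)) \ ball (0 : X) (2 ^ k)),
            ENNReal.ofReal (‖y‖ ^ (-((n : ℝ) + s)))
              ≤ ENNReal.ofReal (((2:ℝ) ^ k) ^ (-((n : ℝ) + s))) := by
          intro y hy
          have hky : (2:ℝ) ^ k ≤ ‖y‖ := by
            have := hy.2
            rw [mem_ball, dist_eq_norm, sub_zero, not_lt] at this
            exact this
          exact ENNReal.ofReal_le_ofReal
            (Real.rpow_le_rpow_of_nonpos (by positivity) hky (neg_nonpos.2 (by positivity)))
        calc (∫⁻ y in (ball (0 : X) (2 ^ (k + 1)) \ ball (0 : X) (2 ^ k)),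
              ENNReal.ofReal (‖y‖ ^ (-((n : ℝ) + s))))
            ≤ ∫⁻ _ in (ball (0 : X) (2 ^ (k + 1)) \ ball (0 : X) (2 ^ k)),
              ENNReal.ofReal (((2:ℝ) ^ k) ^ (-((n : ℝ) + s))) :=
              setLIntegral_mono measurable_const hb
          _ = ENNReal.ofReal (((2:ℝ) ^ k) ^ (-((n : ℝ) + s)))
              * volume (ball (0 : X) (2 ^ (k + 1)) \ ball (0 : X) (2 ^ k)) :=
              setLIntegral_const _ _
          _ ≤ ENNReal.ofReal (((2:ℝ) ^ k) ^ (-((n : ℝ) + s)))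
              * volume (ball (0 : X) (2 ^ (k + 1))) := by
              gcongr
              exact diff_subset
          _ = ENNReal.ofReal (((2:ℝ) ^ k) ^ (-((n : ℝ) + s)))
              * (ENNReal.ofReal (((2:ℝ) ^ (k+1)) ^ n) * ENNReal.ofReal ω) := by
              rw [Measure.addHaar_ball_of_pos _ _ (by positivity), finrank_euclideanSpace_fin, hμB]
          _ = ENNReal.ofReal (2 ^ n * ω) * (ENNReal.ofReal t) ^ k := by
              rw [← ENNReal.ofReal_mul (by positivity), ← ENNReal.ofReal_mul (by positivity),
                ← ENNReal.ofReal_pow ht0.le, ← ENNReal.ofReal_mul (by positivity)]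
              congr 1
              have e1 : ((2:ℝ) ^ k) ^ (-((n : ℝ) + s)) = (2:ℝ) ^ ((k : ℝ) * (-((n : ℝ) + s))) := by
                rw [← Real.rpow_natCast 2 k, ← Real.rpow_mul (by norm_num)]
              have e2 : (((2:ℝ) ^ (k+1)) ^ n : ℝ) = (2:ℝ) ^ ((((k:ℝ) + 1)) * n) := by
                rw [← Real.rpow_natCast ((2:ℝ) ^ (k+1)) n, ← Real.rpow_natCast 2 (k+1),
                  ← Real.rpow_mul (by norm_num)]
                push_cast
                ring_nf
              have e3 : (t ^ k : ℝ) = (2:ℝ) ^ ((k : ℝ) * (-s)) := by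
                rw [ht, ← Real.rpow_natCast ((2:ℝ) ^ (-s)) k, ← Real.rpow_mul (by norm_num)]
                ring_nf
              have e4 : ((2:ℝ) ^ n : ℝ) = (2:ℝ) ^ (n : ℝ) := (Real.rpow_natCast 2 n).symm
              rw [e1, e2, e3, e4,
                show (2:ℝ) ^ ((k:ℝ) * -((n:ℝ) + s)) * ((2:ℝ) ^ (((k:ℝ) + 1) * (n:ℝ)) * ω)
                    = (2:ℝ) ^ ((k:ℝ) * -((n:ℝ) + s)) * (2:ℝ) ^ (((k:ℝ) + 1) * (n:ℝ)) * ω from by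
                  ring,
                ← Real.rpow_add two_pos,
                show (2:ℝ) ^ ((n:ℝ)) * ω * (2:ℝ) ^ ((k:ℝ) * -s)
                    = (2:ℝ) ^ ((n:ℝ)) * (2:ℝ) ^ ((k:ℝ) * -s) * ω from by ring,
                ← Real.rpow_add two_pos]
              congr 2
              ring
    _ = ENNReal.ofReal (2 ^ n * ω) * (1 - ENNReal.ofReal t)⁻¹ := by
        rw [ENNReal.tsum_mul_left, ENNReal.tsum_geometric]
    _ ≤ ENNReal.ofReal (3 * 2 ^ n * ω / s) := by
        have h1t : (1 : ℝ≥0∞) - ENNReal.ofReal t = ENNReal.ofReal (1 - t) := by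
          rw [← ENNReal.ofReal_one, ← ENNReal.ofReal_sub _ ht0.le]
        rw [h1t, ← ENNReal.ofReal_inv_of_pos (by linarith), ← ENNReal.ofReal_mul (by positivity)]
        refine ENNReal.ofReal_le_ofReal ?_
        have hst : s ≤ 3 * (1 - t) := s_le_three hs hs1
        rw [div_eq_mul_inv]
        have : (1 - t)⁻¹ ≤ 3 * s⁻¹ := by
          rw [← one_div, ← div_eq_mul_inv]
          rw [div_le_div_iff₀ (by linarith) hs]
          linarith
        have h2 : (2:ℝ) ^ n * ω * (1 - t)⁻¹ ≤ 2 ^ n * ω * (3 * s⁻¹) :=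
          mul_le_mul_of_nonneg_left this (by positivity)
        refine h2.trans (le_of_eq (by ring))

section
variable {n : ℕ}
local notation "X" => EuclideanSpace ℝ (Fin n)

set_option maxHeartbeats 1000000 in
lemma key_bound (E F : Set (EuclideanSpace ℝ (Fin n)))
    (hE : MeasurableSet E) (M : ℝ) (hM : 0 ≤ M)
    (hFM : F ⊆ closedBall 0 M) {R s : ℝ} (hMR : M + 1 ≤ R)
    (hs : 0 < s) (hs1 : s ≤ 1) :
    |(s * (∫⁻ y in E \ ball 0 1, ENNReal.ofReal (‖y‖ ^ (-((n : ℝ) + s)))).toReal)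
        * (volume F).toReal
      - s * (∫⁻ x in F, ∫⁻ y in E \ ball 0 R,
          ENNReal.ofReal (‖x - y‖ ^ (-((n : ℝ) + s)))).toReal|
    ≤ (volume F).toReal *
        ((3 * 2 ^ n * (volume (ball (0 : EuclideanSpace ℝ (Fin n)) 1)).toReal) *
          ((((1 - M/R)⁻¹) ^ ((n:ℝ) + 1) - 1) + (1 - (1 + M/R) ^ (-((n:ℝ) + 1))))
        + s * (volume (ball (0 : EuclideanSpace ℝ (Fin n)) R)).toReal) := by
  have hR1 : (1:ℝ) ≤ R := by linarith
  have hR0 : (0:ℝ) < R := by linarith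
  have hp0 : 0 < (n:ℝ) + s := by positivity
  have hpn1 : (n:ℝ) + s ≤ (n:ℝ) + 1 := by linarith
  set l : ℝ := M / R with hl
  have hl0 : 0 ≤ l := by positivity
  have h1l : 1/R ≤ 1 - l := by
    have h2 : (M + 1)/R ≤ 1 := by rw [div_le_one hR0]; linarith
    rw [add_div] at h2
    rw [hl]; linarith
  have h1l0 : 0 < 1 - l := lt_of_lt_of_le (by positivity) h1l
  have h1l1 : 1 - l ≤ 1 := by linarith
  set C : ℝ := 3 * 2 ^ n * (volume (ball (0 : X) 1)).toReal with hC
  have hC0 : 0 ≤ C := by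
    rw [hC]; positivity
  set I₁ : ℝ≥0∞ := ∫⁻ y in E \ ball (0:X) 1, ENNReal.ofReal (‖y‖ ^ (-((n : ℝ) + s))) with hI₁
  set IR : ℝ≥0∞ := ∫⁻ y in E \ ball (0:X) R, ENNReal.ofReal (‖y‖ ^ (-((n : ℝ) + s))) with hIR
  have hI₁le : I₁ ≤ ENNReal.ofReal (C / s) := by
    refine le_trans (lintegral_mono_set ?_) (dyadic_bound n hs hs1)
    exact fun y hy => fun h => hy.2 h
  have hI₁top : I₁ ≠ ⊤ := ne_top_of_le_ne_top ENNReal.ofReal_ne_top hI₁le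
  have hIRle : IR ≤ I₁ := lintegral_mono_set (diff_subset_diff_right (ball_subset_ball hR1))
  have hIRtop : IR ≠ ⊤ := ne_top_of_le_ne_top hI₁top hIRle
  have hsplit : I₁ ≤ IR + volume (ball (0:X) R) := by
    have hsub : E \ ball (0:X) 1 ⊆ (E \ ball (0:X) R) ∪ (ball (0:X) R \ ball (0:X) 1) := by
      intro y hy
      by_cases hyR : y ∈ ball (0:X) R
      · exact Or.inr ⟨hyR, hy.2⟩
      · exact Or.inl ⟨hy.1, hyR⟩
    calc I₁ ≤ ∫⁻ y in (E \ ball (0:X) R) ∪ (ball (0:X) R \ ball (0:X) 1),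
          ENNReal.ofReal (‖y‖ ^ (-((n : ℝ) + s))) := lintegral_mono_set hsub
      _ ≤ IR + ∫⁻ y in ball (0:X) R \ ball (0:X) 1,
          ENNReal.ofReal (‖y‖ ^ (-((n : ℝ) + s))) := lintegral_union_le _ _ _
      _ ≤ IR + volume (ball (0:X) R) := by
          gcongr
          calc (∫⁻ y in ball (0:X) R \ ball (0:X) 1,
                ENNReal.ofReal (‖y‖ ^ (-((n : ℝ) + s))))
              ≤ ∫⁻ _ in ball (0:X) R \ ball (0:X) 1, 1 := by
                refine setLIntegral_mono measurable_const fun y hy => ?_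
                have h1y : 1 ≤ ‖y‖ := by
                  have := hy.2
                  rw [mem_ball, dist_eq_norm, sub_zero, not_lt] at this
                  exact this
                calc ENNReal.ofReal (‖y‖ ^ (-((n : ℝ) + s)))
                    ≤ ENNReal.ofReal 1 := ENNReal.ofReal_le_ofReal
                      (Real.rpow_le_one_of_one_le_of_nonpos h1y (by linarith))
                  _ = 1 := ENNReal.ofReal_one
            _ = volume (ball (0:X) R \ ball (0:X) 1) := by
                rw [setLIntegral_const, one_mul]
            _ ≤ volume (ball (0:X) R) := measure_mono diff_subset
  have hker : Measurable fun q : (EuclideanSpace ℝ (Fin n)) × (EuclideanSpace ℝ (Fin n)) =>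
      ENNReal.ofReal (‖q.1 - q.2‖ ^ (-((n : ℝ) + s))) :=
    ((measurable_fst.sub measurable_snd).norm.pow_const _).ennreal_ofReal
  have hinner : Measurable fun x : X =>
      ∫⁻ y in E \ ball 0 R, ENNReal.ofReal (‖x - y‖ ^ (-((n : ℝ) + s))) :=
    Measurable.lintegral_prod_right hker
  have hnorm : ∀ x ∈ F, ∀ y ∈ E \ ball (0:X) R,
      (1 - l) * ‖y‖ ≤ ‖x - y‖ ∧ ‖x - y‖ ≤ (1 + l) * ‖y‖ := by
    intro x hx y hy
    have hxM : ‖x‖ ≤ M := by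
      have := hFM hx
      rwa [mem_closedBall, dist_eq_norm, sub_zero] at this
    have hyR : R ≤ ‖y‖ := by
      have := hy.2
      rwa [mem_ball, dist_eq_norm, sub_zero, not_lt] at this
    have hMl : M ≤ l * ‖y‖ := by
      have h3 : l * R ≤ l * ‖y‖ := mul_le_mul_of_nonneg_left hyR hl0
      have h4 : l * R = M := by rw [hl]; field_simp
      linarith
    refine ⟨?_, ?_⟩
    · have h5 : ‖y‖ - ‖x‖ ≤ ‖x - y‖ := by
        rw [norm_sub_rev]
        linarith [norm_sub_norm_le y x]
      calc (1 - l) * ‖y‖ = ‖y‖ - l * ‖y‖ := by ring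
        _ ≤ ‖y‖ - M := by linarith
        _ ≤ ‖y‖ - ‖x‖ := by linarith
        _ ≤ ‖x - y‖ := h5
    · calc ‖x - y‖ ≤ ‖x‖ + ‖y‖ := norm_sub_le _ _
        _ ≤ M + ‖y‖ := by linarith
        _ ≤ l * ‖y‖ + ‖y‖ := by linarith
        _ = (1 + l) * ‖y‖ := by ring
  have hy0 : ∀ y ∈ E \ ball (0:X) R, 0 < ‖y‖ := fun y hy => by
    have := hy.2
    rw [mem_ball, dist_eq_norm, sub_zero, not_lt] at this
    linarith
  have hIup : ∀ x ∈ F,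
      (∫⁻ y in E \ ball (0:X) R, ENNReal.ofReal (‖x - y‖ ^ (-((n : ℝ) + s))))
        ≤ ENNReal.ofReal ((1 - l) ^ (-((n:ℝ) + s))) * IR := by
    intro x hx
    rw [hIR, ← lintegral_const_mul _ ((measurable_norm.pow_const _).ennreal_ofReal)]
    refine setLIntegral_mono
      (measurable_const.mul ((measurable_norm.pow_const _).ennreal_ofReal)) fun y hy => ?_
    have h := (hnorm x hx y hy).1
    have hyp := hy0 y hy
    calc ENNReal.ofReal (‖x - y‖ ^ (-((n : ℝ) + s)))
        ≤ ENNReal.ofReal (((1 - l) * ‖y‖) ^ (-((n : ℝ) + s))) :=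
          ENNReal.ofReal_le_ofReal
            (Real.rpow_le_rpow_of_nonpos (by positivity) h (by linarith))
      _ = ENNReal.ofReal ((1 - l) ^ (-((n:ℝ) + s))) * ENNReal.ofReal (‖y‖ ^ (-((n : ℝ) + s))) := by
          rw [Real.mul_rpow h1l0.le (norm_nonneg _), ENNReal.ofReal_mul (by positivity)]
  have hIlo : ∀ x ∈ F,
      ENNReal.ofReal ((1 + l) ^ (-((n:ℝ) + s))) * IR
        ≤ ∫⁻ y in E \ ball (0:X) R, ENNReal.ofReal (‖x - y‖ ^ (-((n : ℝ) + s))) := by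
    intro x hx
    rw [hIR, ← lintegral_const_mul _ ((measurable_norm.pow_const _).ennreal_ofReal)]
    refine setLIntegral_mono
      (((measurable_const.sub measurable_id).norm.pow_const _).ennreal_ofReal) fun y hy => ?_
    have h := (hnorm x hx y hy).2
    have hyp := hy0 y hy
    calc ENNReal.ofReal ((1 + l) ^ (-((n:ℝ) + s))) * ENNReal.ofReal (‖y‖ ^ (-((n : ℝ) + s)))
        = ENNReal.ofReal (((1 + l) * ‖y‖) ^ (-((n : ℝ) + s))) := by
          rw [Real.mul_rpow (by linarith) (norm_nonneg _), ENNReal.ofReal_mul (by positivity)]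
      _ ≤ ENNReal.ofReal (‖x - y‖ ^ (-((n : ℝ) + s))) := by
          refine ENNReal.ofReal_le_ofReal (Real.rpow_le_rpow_of_nonpos ?_ h (by linarith))
          have h6 := (hnorm x hx y hy).1
          nlinarith
  set J : ℝ≥0∞ := ∫⁻ x in F, ∫⁻ y in E \ ball (0:X) R,
      ENNReal.ofReal (‖x - y‖ ^ (-((n : ℝ) + s))) with hJ
  have hJup : J ≤ ENNReal.ofReal ((1 - l) ^ (-((n:ℝ) + s))) * IR * volume F := by
    calc J ≤ ∫⁻ _ in F, ENNReal.ofReal ((1 - l) ^ (-((n:ℝ) + s))) * IR :=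
          setLIntegral_mono measurable_const hIup
      _ = ENNReal.ofReal ((1 - l) ^ (-((n:ℝ) + s))) * IR * volume F := setLIntegral_const _ _
  have hJlo : ENNReal.ofReal ((1 + l) ^ (-((n:ℝ) + s))) * IR * volume F ≤ J := by
    calc ENNReal.ofReal ((1 + l) ^ (-((n:ℝ) + s))) * IR * volume F
        = ∫⁻ _ in F, ENNReal.ofReal ((1 + l) ^ (-((n:ℝ) + s))) * IR :=
          (setLIntegral_const _ _).symm
      _ ≤ J := setLIntegral_mono hinner hIlo
  have hFtop : volume F ≠ ⊤ :=
    ne_top_of_le_ne_top (measure_closedBall_lt_top).ne (measure_mono hFM)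
  have hJtop : J ≠ ⊤ := by
    refine ne_top_of_le_ne_top ?_ hJup
    exact ENNReal.mul_ne_top (ENNReal.mul_ne_top ENNReal.ofReal_ne_top hIRtop) hFtop
  set a : ℝ := I₁.toReal with ha
  set b : ℝ := IR.toReal with hb
  set j : ℝ := J.toReal with hj
  set m : ℝ := (volume F).toReal with hm
  set V : ℝ := (volume (ball (0:X) R)).toReal with hV
  have ha0 : 0 ≤ a := ENNReal.toReal_nonneg
  have hb0 : 0 ≤ b := ENNReal.toReal_nonneg
  have hj0 : 0 ≤ j := ENNReal.toReal_nonneg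
  have hm0 : 0 ≤ m := ENNReal.toReal_nonneg
  have hV0 : 0 ≤ V := ENNReal.toReal_nonneg
  have f1 : b ≤ a := ENNReal.toReal_mono hI₁top hIRle
  have f2 : a ≤ b + V := by
    have := ENNReal.toReal_mono
      (ENNReal.add_ne_top.2 ⟨hIRtop, measure_ball_lt_top.ne⟩) hsplit
    rwa [ENNReal.toReal_add hIRtop measure_ball_lt_top.ne] at this
  have f5 : s * a ≤ C := by
    have h1 : a ≤ C / s := by
      have := ENNReal.toReal_mono ENNReal.ofReal_ne_top hI₁le
      rwa [ENNReal.toReal_ofReal (by positivity)] at this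
    calc s * a ≤ s * (C / s) := mul_le_mul_of_nonneg_left h1 hs.le
      _ = C := by field_simp
  set cu : ℝ := (1 - l) ^ (-((n:ℝ) + s)) with hcu
  set cl : ℝ := (1 + l) ^ (-((n:ℝ) + s)) with hcl
  have hcu0 : 0 ≤ cu := Real.rpow_nonneg h1l0.le _
  have hcl0 : 0 ≤ cl := Real.rpow_nonneg (by linarith) _
  have f3 : j ≤ cu * b * m := by
    have := ENNReal.toReal_mono
      (ENNReal.mul_ne_top (ENNReal.mul_ne_top ENNReal.ofReal_ne_top hIRtop) hFtop) hJup
    rwa [ENNReal.toReal_mul, ENNReal.toReal_mul, ENNReal.toReal_ofReal hcu0] at this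
  have f4 : cl * b * m ≤ j := by
    have := ENNReal.toReal_mono hJtop hJlo
    rwa [ENNReal.toReal_mul, ENNReal.toReal_mul, ENNReal.toReal_ofReal hcl0] at this
  set cB : ℝ := ((1 - l)⁻¹) ^ ((n:ℝ) + 1) with hcB
  set cb : ℝ := (1 + l) ^ (-((n:ℝ) + 1)) with hcb
  have hcueq : cu = ((1 - l)⁻¹) ^ ((n:ℝ) + s) := by
    rw [hcu, Real.rpow_neg h1l0.le, ← Real.inv_rpow h1l0.le]
  have hinv1 : 1 ≤ (1 - l)⁻¹ := (one_le_inv₀ h1l0).2 h1l1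
  have hcucB : cu ≤ cB := by
    rw [hcueq, hcB]
    exact Real.rpow_le_rpow_of_exponent_le hinv1 hpn1
  have hcu1 : 1 ≤ cu := by
    rw [hcueq]
    calc (1:ℝ) = (1 - l)⁻¹ ^ (0:ℝ) := (Real.rpow_zero _).symm
      _ ≤ (1 - l)⁻¹ ^ ((n:ℝ) + s) := Real.rpow_le_rpow_of_exponent_le hinv1 hp0.le
  have hcbcl : cb ≤ cl := by
    rw [hcb, hcl]
    exact Real.rpow_le_rpow_of_exponent_le (by linarith) (by linarith)
  have hcl1 : cl ≤ 1 := Real.rpow_le_one_of_one_le_of_nonpos (by linarith) (by linarith)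
  have hcb0 : 0 ≤ cb := Real.rpow_nonneg (by linarith) _
  have hcb1 : cb ≤ 1 := le_trans hcbcl hcl1
  have hcB1 : 1 ≤ cB := le_trans hcu1 hcucB
  have hsa0 : 0 ≤ s * a := by positivity
  have g1 : s * j ≤ cu * (s * a) * m := by
    have h7 : cu * b ≤ cu * a := mul_le_mul_of_nonneg_left f1 hcu0
    have h8 : cu * b * m ≤ cu * a * m := mul_le_mul_of_nonneg_right h7 hm0
    have h9 : j ≤ cu * a * m := le_trans f3 h8
    linarith [mul_le_mul_of_nonneg_left h9 hs.le]
  have g2 : (cu - 1) * ((s * a) * m) ≤ (cB - 1) * (C * m) :=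
    mul_le_mul (by linarith) (mul_le_mul_of_nonneg_right f5 hm0) (by positivity) (by linarith)
  have g3 : cl * (s * (a - V)) * m ≤ s * j := by
    have h7 : a - V ≤ b := by linarith
    have h8 : cl * (a - V) ≤ cl * b := mul_le_mul_of_nonneg_left h7 hcl0
    have h9 : cl * (a - V) * m ≤ cl * b * m := mul_le_mul_of_nonneg_right h8 hm0
    have h10 : cl * (a - V) * m ≤ j := le_trans h9 f4
    linarith [mul_le_mul_of_nonneg_left h10 hs.le]
  have g4 : (1 - cl) * ((s * a) * m) ≤ (1 - cb) * (C * m) :=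
    mul_le_mul (by linarith) (mul_le_mul_of_nonneg_right f5 hm0) (by positivity) (by linarith)
  have g5 : cl * (s * V * m) ≤ s * V * m := by
    linarith [mul_le_mul_of_nonneg_right hcl1 (by positivity : (0:ℝ) ≤ s * V * m)]
  have gB : 0 ≤ (cB - 1) * (C * m) := mul_nonneg (by linarith) (mul_nonneg hC0 hm0)
  have gb : 0 ≤ (1 - cb) * (C * m) := mul_nonneg (by linarith) (mul_nonneg hC0 hm0)
  have gV : 0 ≤ s * V * m := by positivity
  rw [abs_le]
  constructor
  · linarith [g1, g2, gb, gV]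
  · linarith [g3, g4, g5, gB]
end


theorem stmt_6 {n : ℕ} (E F : Set (EuclideanSpace ℝ (Fin n)))
    (hE : MeasurableSet E) (hF : MeasurableSet F) (hFb : Bornology.IsBounded F) :
    Tendsto (fun R : ℝ =>
      Filter.limsup (fun s : ℝ =>
        |(s * (∫⁻ y in E \ ball 0 1, ENNReal.ofReal (‖y‖ ^ (-((n : ℝ) + s)))).toReal)
            * (volume F).toReal
          - s * (∫⁻ x in F, ∫⁻ y in E \ ball 0 R,
              ENNReal.ofReal (‖x - y‖ ^ (-((n : ℝ) + s)))).toReal|)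
        (nhdsWithin 0 (Set.Ioi 0)))
      atTop (nhds 0) := by
  obtain ⟨M₀, hM₀⟩ := hFb.subset_closedBall (0 : EuclideanSpace ℝ (Fin n))
  set M : ℝ := max M₀ 0 with hMdef
  have hM : 0 ≤ M := le_max_right _ _
  have hFM : F ⊆ closedBall (0 : EuclideanSpace ℝ (Fin n)) M :=
    hM₀.trans (closedBall_subset_closedBall (le_max_left _ _))
  set m : ℝ := (volume F).toReal with hm
  have hm0 : 0 ≤ m := ENNReal.toReal_nonneg
  set C : ℝ := 3 * 2 ^ n * (volume (ball (0 : EuclideanSpace ℝ (Fin n)) 1)).toReal with hC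
  have hC0 : 0 ≤ C := by rw [hC]; positivity
  set D : ℝ → ℝ := fun R =>
    ((((1 - M/R)⁻¹) ^ ((n:ℝ) + 1) - 1) + (1 - (1 + M/R) ^ (-((n:ℝ) + 1)))) with hD
  set g : ℝ → ℝ → ℝ := fun R s =>
    |(s * (∫⁻ y in E \ ball 0 1, ENNReal.ofReal (‖y‖ ^ (-((n : ℝ) + s)))).toReal)
        * (volume F).toReal
      - s * (∫⁻ x in F, ∫⁻ y in E \ ball 0 R,
          ENNReal.ofReal (‖x - y‖ ^ (-((n : ℝ) + s)))).toReal| with hg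
  -- per-R bounds on the limsup
  have hkey : ∀ R : ℝ, M + 1 ≤ R →
      0 ≤ limsup (g R) (nhdsWithin 0 (Set.Ioi 0)) ∧
      limsup (g R) (nhdsWithin 0 (Set.Ioi 0)) ≤ m * (C * D R) := by
    intro R hR
    set V : ℝ := (volume (ball (0 : EuclideanSpace ℝ (Fin n)) R)).toReal with hV
    have hV0 : 0 ≤ V := ENNReal.toReal_nonneg
    have hev : ∀ᶠ s in nhdsWithin 0 (Set.Ioi 0), g R s ≤ m * (C * D R) + s * (m * V) := by
      filter_upwards [Ioc_mem_nhdsGT_of_mem (α := ℝ) ⟨le_refl 0, one_pos⟩] with s hs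
      have h := key_bound E F hE M hM hFM hR hs.1 hs.2
      calc g R s ≤ m * (C * D R + s * V) := h
        _ = m * (C * D R) + s * (m * V) := by ring
    have htd : Tendsto (fun s : ℝ => m * (C * D R) + s * (m * V))
        (nhdsWithin 0 (Set.Ioi 0)) (nhds (m * (C * D R))) := by
      have h0 : Tendsto (fun s : ℝ => s) (nhdsWithin 0 (Set.Ioi 0)) (nhds 0) :=
        tendsto_id.mono_left nhdsWithin_le_nhds
      have := (tendsto_const_nhds (x := m * (C * D R))
        (f := nhdsWithin (0:ℝ) (Set.Ioi 0))).add (h0.mul_const (m * V))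
      simpa using this
    have hbddv : IsBoundedUnder (· ≤ ·) (nhdsWithin (0:ℝ) (Set.Ioi 0))
        (fun s : ℝ => m * (C * D R) + s * (m * V)) := htd.isBoundedUnder_le
    have hbddg : IsBoundedUnder (· ≤ ·) (nhdsWithin (0:ℝ) (Set.Ioi 0)) (g R) :=
      hbddv.mono_le hev
    constructor
    · refine le_limsup_of_frequently_le ?_ hbddg
      exact (Eventually.of_forall fun s => abs_nonneg _).frequently
    · calc limsup (g R) (nhdsWithin 0 (Set.Ioi 0))
          ≤ limsup (fun s : ℝ => m * (C * D R) + s * (m * V)) (nhdsWithin 0 (Set.Ioi 0)) :=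
            limsup_le_limsup hev
              ((isBoundedUnder_of_eventually_ge
                (Eventually.of_forall fun s => abs_nonneg _)).isCoboundedUnder_le) hbddv
        _ = m * (C * D R) := htd.limsup_eq
  -- the bound tends to 0
  have hDlim : Tendsto (fun R : ℝ => m * (C * D R)) atTop (nhds 0) := by
    have hMR : Tendsto (fun R : ℝ => M / R) atTop (nhds 0) :=
      tendsto_const_nhds.div_atTop tendsto_id
    have h1 : Tendsto (fun R : ℝ => ((1 - M/R)⁻¹) ^ ((n:ℝ) + 1)) atTop (nhds 1) := by
      have ha : Tendsto (fun R : ℝ => 1 - M/R) atTop (nhds 1) := by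
        simpa using (tendsto_const_nhds (x := (1:ℝ))).sub hMR
      have hb : Tendsto (fun R : ℝ => (1 - M/R)⁻¹) atTop (nhds 1) := by
        simpa using ha.inv₀ (by norm_num)
      have hc := hb.rpow_const (p := (n:ℝ) + 1) (Or.inl (by norm_num))
      simpa using hc
    have h2 : Tendsto (fun R : ℝ => (1 + M/R) ^ (-((n:ℝ) + 1))) atTop (nhds 1) := by
      have ha : Tendsto (fun R : ℝ => 1 + M/R) atTop (nhds 1) := by
        simpa using (tendsto_const_nhds (x := (1:ℝ))).add hMR
      have hc := ha.rpow_const (p := -((n:ℝ) + 1)) (Or.inl (by norm_num))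
      simpa using hc
    have h3 : Tendsto D atTop (nhds 0) := by
      have h4 : Tendsto (fun R : ℝ => (((1 - M/R)⁻¹) ^ ((n:ℝ) + 1) - 1)
          + (1 - (1 + M/R) ^ (-((n:ℝ) + 1)))) atTop (nhds ((1 - 1) + (1 - 1))) :=
        (h1.sub tendsto_const_nhds).add (tendsto_const_nhds.sub h2)
      rw [hD]
      convert h4 using 1
      norm_num
    have h5 : Tendsto (fun R : ℝ => (m * C) * D R) atTop (nhds ((m * C) * 0)) :=
      h3.const_mul (m * C)
    rw [mul_zero] at h5
    have heq : (fun R : ℝ => m * (C * D R)) = fun R : ℝ => (m * C) * D R := by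
      funext R; ring
    rw [heq]
    exact h5
  -- squeeze
  refine tendsto_of_tendsto_of_tendsto_of_le_of_le' tendsto_const_nhds hDlim ?_ ?_
  · filter_upwards [eventually_ge_atTop (M + 1)] with R hR
    exact (hkey R hR).1
  · filter_upwards [eventually_ge_atTop (M + 1)] with R hR
    exact (hkey R hR).2
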